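/- Let G be a group, let K and L be subgroups of G, let C be a subgroup of K, and let φ : C → G be a monomorphism with φ(C) ≤ L. Let G∗_φ = ⟨G, t | tct⁻¹ = φ(c) for all c ∈ C⟩ be the HNN extension, with G regarded as a subgroup. Let P be the pushout (amalgamated product) of the inclusion C → K and the map C → L, c ↦ φ(c). Then the homomorphism P → G∗_φ determined by k ↦ tkt⁻¹ for k ∈ K and l ↦ l for l ∈ L is injective, and its image is the subgroup ⟨tKt⁻¹, L⟩ of G∗_φ; in particular ⟨K^t, L⟩ is isomorphic to the amalgamated product of K and L over C along these maps. -/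

import Mathlib

open Monoid

/-! ### The amalgamated product of two groups -/

/-- The amalgamated product `G₁ ∗_C G₂` determined by `G₁ ←f₁− C −f₂→ G₂`: the quotient of
the free product `G₁ ∗ G₂` by the normal closure of the elements `f₁ c · (f₂ c)⁻¹`. -/
abbrev Amal {C G₁ G₂ : Type*} [Group C] [Group G₁] [Group G₂]
    (f₁ : C →* G₁) (f₂ : C →* G₂) : Type _ :=
  Coprod G₁ G₂ ⧸ Subgroup.normalClosure
    {x : Coprod G₁ G₂ | ∃ c : C, x = Coprod.inl (f₁ c) * (Coprod.inr (f₂ c))⁻¹}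

/-- The canonical homomorphism `G₁ →* G₁ ∗_C G₂`. -/
def Amal.inl {C G₁ G₂ : Type*} [Group C] [Group G₁] [Group G₂]
    (f₁ : C →* G₁) (f₂ : C →* G₂) : G₁ →* Amal f₁ f₂ :=
  (QuotientGroup.mk' _).comp Coprod.inl

/-- The canonical homomorphism `G₂ →* G₁ ∗_C G₂`. -/
def Amal.inr {C G₁ G₂ : Type*} [Group C] [Group G₁] [Group G₂]
    (f₁ : C →* G₁) (f₂ : C →* G₂) : G₂ →* Amal f₁ f₂ :=
  (QuotientGroup.mk' _).comp Coprod.inr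


namespace HnnAmalAux

open HNNExtension

variable {G : Type*} [Group G] (K L C : Subgroup G) (hCK : C ≤ K)
  (φ : ↥C →* G) (hφ : Function.Injective φ) (hφL : φ.range ≤ L)
  (r₁ : ↥C →* ↥K) (hr₁ : ∀ c : ↥C, (r₁ c : G) = (c : G))
  (r₂ : ↥C →* ↥L) (hr₂ : ∀ c : ↥C, (r₂ c : G) = φ c)

local notation "H" => HNNExtension G C φ.range (MonoidHom.ofInjective hφ)

/-- `k ↦ t k t⁻¹`. -/
noncomputable def fK : ↥K →* H :=
  (MulAut.conj (t : H)).toMonoidHom.comp (HNNExtension.of.comp K.subtype)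

noncomputable def fL : ↥L →* H := HNNExtension.of.comp L.subtype

noncomputable def f : Coprod ↥K ↥L →* H := Coprod.lift (fK K C φ hφ) (fL L C φ hφ)

lemma fK_apply (k : ↥K) : fK K C φ hφ k = t * of (k : G) * t⁻¹ := by
  simp [fK, MulAut.conj_apply, mul_assoc]

lemma fL_apply (l : ↥L) : fL L C φ hφ l = of (l : G) := rfl

include hr₁ hr₂ in
lemma hker : Subgroup.normalClosure
    {x : Coprod ↥K ↥L | ∃ c : ↥C, x = Coprod.inl (r₁ c) * (Coprod.inr (r₂ c))⁻¹}
    ≤ (f K L C φ hφ).ker := by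
  apply Subgroup.normalClosure_le_normal
  rintro x ⟨c, rfl⟩
  simp only [SetLike.mem_coe, MonoidHom.mem_ker, map_mul, map_inv, f,
    Coprod.lift_apply_inl, Coprod.lift_apply_inr, fK_apply, fL_apply, hr₁, hr₂]
  have ht := t_mul_of (φ := MonoidHom.ofInjective hφ) c
  have h2 : ((MonoidHom.ofInjective hφ c : φ.range) : G) = φ c := rfl
  rw [h2] at ht
  rw [ht]
  group

/-- The homomorphism `K ∗_C L →* G∗_φ`. -/
noncomputable def F : Amal r₁ r₂ →* H :=
  QuotientGroup.lift _ (f K L C φ hφ) (hker K L C φ hφ r₁ hr₁ r₂ hr₂)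

lemma F_inl (k : ↥K) : F K L C φ hφ r₁ hr₁ r₂ hr₂ (Amal.inl r₁ r₂ k) = t * of (k : G) * t⁻¹ := by
  show QuotientGroup.lift _ _ _ (QuotientGroup.mk (Coprod.inl k)) = _
  rw [QuotientGroup.lift_mk']
  simp [f, Coprod.lift_apply_inl, fK_apply]

lemma F_inr (l : ↥L) : F K L C φ hφ r₁ hr₁ r₂ hr₂ (Amal.inr r₁ r₂ l) = of (l : G) := by
  show QuotientGroup.lift _ _ _ (QuotientGroup.mk (Coprod.inr l)) = _
  rw [QuotientGroup.lift_mk']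
  simp [f, Coprod.lift_apply_inr, fL_apply]

lemma inl_eq_inr (c : ↥C) :
    Amal.inl r₁ r₂ (r₁ c) = Amal.inr r₁ r₂ (r₂ c) := by
  show QuotientGroup.mk _ = QuotientGroup.mk _
  rw [QuotientGroup.eq]
  have hg : Coprod.inl (r₁ c) * (Coprod.inr (r₂ c))⁻¹ ∈
      Subgroup.normalClosure {x : Coprod ↥K ↥L |
        ∃ c : ↥C, x = Coprod.inl (r₁ c) * (Coprod.inr (r₂ c))⁻¹} :=
    Subgroup.subset_normalClosure ⟨c, rfl⟩
  have h2 := Subgroup.Normal.conj_mem (Subgroup.normalClosure_normal) _ (inv_mem hg)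
    (Coprod.inl (r₁ c))⁻¹
  simpa [mul_assoc] using h2


/-- Product in the amalgam corresponding to an alternating word. -/
noncomputable def amalProd (ws : List (↥K × ↥L)) : Amal r₁ r₂ :=
  (ws.map (fun p => Amal.inl r₁ r₂ p.1 * Amal.inr r₁ r₂ p.2)).prod

/-- Product in the HNN extension corresponding to an alternating word. -/
noncomputable def hnnProd (ws : List (↥K × ↥L)) : H :=
  (ws.map (fun p => t * of (p.1 : G) * t⁻¹ * of (p.2 : G))).prod

/-- Reducedness condition for alternating words. -/
def Good (ws : List (↥K × ↥L)) : Prop :=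
  (∀ p ∈ ws, (p.1 : G) ∉ C) ∧ ws.Chain' (fun a _ => ((a.2 : G) ∉ φ.range))

lemma good_nil : Good K L C φ ([] : List (↥K × ↥L)) := ⟨by simp, List.isChain_nil⟩

lemma F_amalProd (ws : List (↥K × ↥L)) :
    F K L C φ hφ r₁ hr₁ r₂ hr₂ (amalProd K L C r₁ r₂ ws) = hnnProd K L C φ hφ ws := by
  induction ws with
  | nil => simp [amalProd, hnnProd]
  | cons p rest ih =>
    simp only [amalProd, hnnProd, List.map_cons, List.prod_cons, map_mul] at *
    rw [F_inl, F_inr, ih]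

include hCK hr₁ hr₂ in
lemma exists_rep (q : Amal r₁ r₂) :
    ∃ (l₀ : ↥L) (ws : List (↥K × ↥L)), Good K L C φ ws ∧
      q = Amal.inr r₁ r₂ l₀ * amalProd K L C r₁ r₂ ws := by
  obtain ⟨x, rfl⟩ := QuotientGroup.mk_surjective q
  have main : ∀ x : Coprod ↥K ↥L, ∀ (l₀ : ↥L) (ws : List (↥K × ↥L)), Good K L C φ ws →
      ∃ (l₀' : ↥L) (ws' : List (↥K × ↥L)), Good K L C φ ws' ∧
        (QuotientGroup.mk x : Amal r₁ r₂) * (Amal.inr r₁ r₂ l₀ * amalProd K L C r₁ r₂ ws) =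
          Amal.inr r₁ r₂ l₀' * amalProd K L C r₁ r₂ ws' := by
    intro x
    induction x using Coprod.induction_on with
    | inr l =>
      intro l₀ ws hgood
      exact ⟨l * l₀, ws, hgood, by
        show Amal.inr r₁ r₂ l * _ = _
        rw [map_mul, mul_assoc]⟩
    | mul x y hx hy =>
      intro l₀ ws hgood
      obtain ⟨l₁, ws₁, h₁, e₁⟩ := hy l₀ ws hgood
      obtain ⟨l₂, ws₂, h₂, e₂⟩ := hx l₁ ws₁ h₁
      refine ⟨l₂, ws₂, h₂, ?_⟩
      show (QuotientGroup.mk x : Amal r₁ r₂) * QuotientGroup.mk y * _ = _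
      rw [mul_assoc, e₁, e₂]
    | inl k =>
      intro l₀ ws hgood
      show ∃ _ _, _ ∧ Amal.inl r₁ r₂ k * _ = _
      by_cases hk : (k : G) ∈ C
      · -- `i k = j (r₂ ⟨k, hk⟩)`, absorb into the head
        have hkr : r₁ ⟨(k : G), hk⟩ = k := Subtype.ext (hr₁ _)
        refine ⟨r₂ ⟨(k : G), hk⟩ * l₀, ws, hgood, ?_⟩
        rw [map_mul, ← inl_eq_inr K L C r₁ r₂, hkr, mul_assoc]
      · match ws, hgood with
        | [], _ =>
          refine ⟨1, [(k, l₀)], ⟨by simpa using hk, List.isChain_singleton _⟩, ?_⟩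
          simp [amalProd, mul_assoc]
        | (k₁, l₁) :: rest, hgood =>
          by_cases hl : (l₀ : G) ∈ φ.range
          · obtain ⟨c, hc⟩ := hl
            have hl₀ : r₂ c = l₀ := Subtype.ext (by rw [hr₂]; exact hc)
            have hjl₀ : Amal.inr r₁ r₂ l₀ = Amal.inl r₁ r₂ (r₁ c) := by
              rw [← hl₀, inl_eq_inr K L C r₁ r₂]
            set k' : ↥K := k * r₁ c * k₁ with hk'def
            have key : Amal.inl r₁ r₂ k *
                (Amal.inr r₁ r₂ l₀ * amalProd K L C r₁ r₂ ((k₁, l₁) :: rest)) =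
                Amal.inl r₁ r₂ k' * Amal.inr r₁ r₂ l₁ * amalProd K L C r₁ r₂ rest := by
              rw [hjl₀]
              simp only [amalProd, List.map_cons, List.prod_cons, hk'def, map_mul]
              group
            by_cases hk' : (k' : G) ∈ C
            · have hkr' : r₁ ⟨(k' : G), hk'⟩ = k' := Subtype.ext (hr₁ _)
              refine ⟨r₂ ⟨(k' : G), hk'⟩ * l₁, rest,
                ⟨fun p hp => hgood.1 p (List.mem_cons_of_mem _ hp), hgood.2.tail⟩, ?_⟩
              have hsw : Amal.inl r₁ r₂ k' = Amal.inr r₁ r₂ (r₂ ⟨(k' : G), hk'⟩) := by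
                rw [← inl_eq_inr K L C r₁ r₂]
                exact congrArg _ hkr'.symm
              rw [key, hsw, map_mul, mul_assoc]
            · refine ⟨1, (k', l₁) :: rest, ⟨?_, ?_⟩, ?_⟩
              · rintro p hp
                rcases List.mem_cons.1 hp with rfl | hp
                · exact hk'
                · exact hgood.1 p (List.mem_cons_of_mem _ hp)
              · exact List.isChain_cons.2 ⟨(List.isChain_cons.1 hgood.2).1,
                  (List.isChain_cons.1 hgood.2).2⟩
              · rw [key]
                simp [amalProd, mul_assoc]
          · refine ⟨1, (k, l₀) :: (k₁, l₁) :: rest, ⟨?_, ?_⟩, ?_⟩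
            · rintro p hp
              rcases List.mem_cons.1 hp with rfl | hp
              · exact hk
              · exact hgood.1 p hp
            · exact List.isChain_cons_cons.2 ⟨fun h => absurd h hl, hgood.2⟩
            · simp [amalProd, mul_assoc]
  obtain ⟨l₀', ws', h', e'⟩ := main x 1 [] (good_nil K L C φ)
  refine ⟨l₀', ws', h', ?_⟩
  simpa [amalProd] using e'


/-- The HNN reduced-word list corresponding to an alternating word. -/
def toListHNN (ws : List (↥K × ↥L)) : List (ℤˣ × G) :=
  ws.flatMap (fun p => [((1 : ℤˣ), (p.1 : G)), ((-1 : ℤˣ), (p.2 : G))])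

lemma chain_toListHNN {ws : List (↥K × ↥L)} (hgood : Good K L C φ ws) :
    (toListHNN K L ws).Chain'
      (fun a b => a.2 ∈ toSubgroup C φ.range a.1 → a.1 = b.1) := by
  induction ws with
  | nil => exact List.isChain_nil
  | cons p rest ih =>
    have h1 : toListHNN K L (p :: rest) =
        ((1 : ℤˣ), (p.1 : G)) :: ((-1 : ℤˣ), (p.2 : G)) :: toListHNN K L rest := rfl
    rw [h1]
    refine List.isChain_cons_cons.2 ?_
    refine ⟨fun h => absurd h (hgood.1 p (List.mem_cons_self (a := p) (l := rest))), ?_⟩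
    refine List.isChain_cons.2 ⟨?_, ih ⟨fun q hq => hgood.1 q (List.mem_cons_of_mem _ hq),
      hgood.2.tail⟩⟩
    intro b hb hmem
    exfalso
    match rest, hb, hgood with
    | q :: t, hb, hgood =>
      have : (p.2 : G) ∉ φ.range := (List.isChain_cons_cons.1 hgood.2).1
      exact this hmem

lemma prod_toListHNN (ws : List (↥K × ↥L)) :
    ((toListHNN K L ws).map
      (fun x => (t : H) ^ (x.1 : ℤ) * of x.2)).prod = hnnProd K L C φ hφ ws := by
  induction ws with
  | nil => simp [toListHNN, hnnProd]
  | cons p rest ih =>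
    have h1 : toListHNN K L (p :: rest) =
        ((1 : ℤˣ), (p.1 : G)) :: ((-1 : ℤˣ), (p.2 : G)) :: toListHNN K L rest := rfl
    rw [h1]
    simp only [List.map_cons, List.prod_cons, hnnProd, ih]
    have hv1 : (((1 : ℤˣ) : ℤ)) = (1 : ℤ) := rfl
    have hv2 : (((-1 : ℤˣ) : ℤ)) = (-1 : ℤ) := rfl
    rw [hv1, hv2, zpow_one, zpow_neg_one]
    group

include hCK hr₁ hr₂ in
lemma F_injective : Function.Injective (F K L C φ hφ r₁ hr₁ r₂ hr₂) := by
  rw [injective_iff_map_eq_one]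
  intro q hq
  obtain ⟨l₀, ws, hgood, rfl⟩ := exists_rep K L C hCK φ r₁ hr₁ r₂ hr₂ q
  rw [map_mul, F_inr, F_amalProd] at hq
  set w : NormalWord.ReducedWord G C φ.range :=
    ⟨(l₀ : G), toListHNN K L ws, chain_toListHNN K L C φ hgood⟩ with hw
  have hwp : w.prod (MonoidHom.ofInjective hφ) = 1 := by
    rw [NormalWord.ReducedWord.prod]
    show of (l₀ : G) * _ = 1
    rw [prod_toListHNN]
    exact hq
  have hnil : w.toList = [] := by
    refine ReducedWord.toList_eq_nil_of_mem_of_range (MonoidHom.ofInjective hφ) w ?_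
    rw [hwp]
    exact ⟨1, map_one _⟩
  have hwsnil : ws = [] := by
    cases ws with
    | nil => rfl
    | cons p rest => exact absurd hnil (by simp [hw, toListHNN])
  subst hwsnil
  have h1 : hnnProd K L C φ hφ ([] : List (↥K × ↥L)) = 1 := by simp [hnnProd]
  rw [h1, mul_one] at hq
  have h2 : (of (l₀ : G) : H) = of (1 : G) := by rw [hq, map_one]
  have : (l₀ : G) = 1 := HNNExtension.of_injective (MonoidHom.ofInjective hφ) h2
  have hl : l₀ = 1 := Subtype.ext this
  rw [hl]
  simp [amalProd]

include hCK hr₁ hr₂ in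
lemma F_range : (F K L C φ hφ r₁ hr₁ r₂ hr₂).range =
    (K.map (HNNExtension.of : G →* H)).map (MulAut.conj (t : H)).toMonoidHom ⊔
      L.map (HNNExtension.of : G →* H) := by
  apply le_antisymm
  · rintro x ⟨q, rfl⟩
    obtain ⟨y, rfl⟩ := QuotientGroup.mk_surjective q
    induction y using Coprod.induction_on with
    | inl k =>
      have : (QuotientGroup.mk (Coprod.inl k) : Amal r₁ r₂) = Amal.inl r₁ r₂ k := rfl
      rw [this, F_inl]
      refine Subgroup.mem_sup_left ⟨of (k : G), ⟨(k : G), k.2, rfl⟩, ?_⟩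
      simp [MulAut.conj_apply, mul_assoc]
    | inr l =>
      have : (QuotientGroup.mk (Coprod.inr l) : Amal r₁ r₂) = Amal.inr r₁ r₂ l := rfl
      rw [this, F_inr]
      exact Subgroup.mem_sup_right ⟨(l : G), l.2, rfl⟩
    | mul a b ha hb =>
      have : (QuotientGroup.mk (a * b) : Amal r₁ r₂) =
        QuotientGroup.mk a * QuotientGroup.mk b := rfl
      rw [this, map_mul]
      exact mul_mem ha hb
  · rw [sup_le_iff]
    constructor
    · intro x hx
      simp only [Subgroup.mem_map] at hx
      obtain ⟨y, ⟨g, hg, rfl⟩, rfl⟩ := hx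
      refine ⟨Amal.inl r₁ r₂ ⟨g, hg⟩, ?_⟩
      rw [F_inl]
      simp [MulAut.conj_apply, mul_assoc]
    · intro x hx
      simp only [Subgroup.mem_map] at hx
      obtain ⟨g, hg, rfl⟩ := hx
      exact ⟨Amal.inr r₁ r₂ ⟨g, hg⟩, F_inr K L C φ hφ r₁ hr₁ r₂ hr₂ ⟨g, hg⟩⟩

end HnnAmalAux


/-- Let `K, L ≤ G`, `C ≤ K`, and let `φ : C → G` be a monomorphism with
`φ(C) ≤ L`.  Let `G∗_φ = ⟨G, t ∣ t c t⁻¹ = φ(c)⟩` be the HNN extension, and let `P` be the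
amalgamated product `K ∗_C L` of the inclusion `C → K` and `c ↦ φ(c) : C → L`.  Then the
homomorphism `P → G∗_φ` determined by `k ↦ t k t⁻¹` and `l ↦ l` is injective with image
`⟨t K t⁻¹, L⟩`; in particular `⟨K^t, L⟩` is isomorphic to `K ∗_C L`. -/
theorem hnn_conjugate_amalgam
    {G : Type*} [Group G] (K L C : Subgroup G) (hCK : C ≤ K)
    (φ : ↥C →* G) (hφ : Function.Injective φ) (hφL : φ.range ≤ L)
    -- `r₁` is the inclusion `C → K` and `r₂` is `φ` viewed as a map `C → L`:
    (r₁ : ↥C →* ↥K) (hr₁ : ∀ c : ↥C, (r₁ c : G) = (c : G))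
    (r₂ : ↥C →* ↥L) (hr₂ : ∀ c : ↥C, (r₂ c : G) = φ c) :
    ∃ F : Amal r₁ r₂ →* HNNExtension G C φ.range (MonoidHom.ofInjective hφ),
      (∀ k : ↥K, F (Amal.inl r₁ r₂ k) =
        HNNExtension.t * HNNExtension.of (k : G) * HNNExtension.t⁻¹) ∧
      (∀ l : ↥L, F (Amal.inr r₁ r₂ l) = HNNExtension.of (l : G)) ∧
      Function.Injective F ∧
      F.range =
        (K.map (HNNExtension.of :
            G →* HNNExtension G C φ.range (MonoidHom.ofInjective hφ))).map
          (MulAut.conj (HNNExtension.t)).toMonoidHom ⊔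
        L.map (HNNExtension.of :
            G →* HNNExtension G C φ.range (MonoidHom.ofInjective hφ)) ∧
      Nonempty (Amal r₁ r₂ ≃*
        ↥((K.map (HNNExtension.of :
              G →* HNNExtension G C φ.range (MonoidHom.ofInjective hφ))).map
            (MulAut.conj (HNNExtension.t)).toMonoidHom ⊔
          L.map (HNNExtension.of :
              G →* HNNExtension G C φ.range (MonoidHom.ofInjective hφ)))) := by
  refine ⟨HnnAmalAux.F K L C φ hφ r₁ hr₁ r₂ hr₂,
    HnnAmalAux.F_inl K L C φ hφ r₁ hr₁ r₂ hr₂,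
    HnnAmalAux.F_inr K L C φ hφ r₁ hr₁ r₂ hr₂,
    HnnAmalAux.F_injective K L C hCK φ hφ r₁ hr₁ r₂ hr₂,
    HnnAmalAux.F_range K L C hCK φ hφ r₁ hr₁ r₂ hr₂,
    ⟨(MonoidHom.ofInjective (HnnAmalAux.F_injective K L C hCK φ hφ r₁ hr₁ r₂ hr₂)).trans
      (MulEquiv.subgroupCongr (HnnAmalAux.F_range K L C hCK φ hφ r₁ hr₁ r₂ hr₂))⟩⟩
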